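/- Define M(k) := ∑_{j=0}^∞ (Γ(j + 3/2)/Γ(3/2)) · k^j/(j!)² and ω(k) := (π/4) · M(k)² / ((1 + k) · e^{2k}) for k ≥ 0. Then ω(k) tends to 1 as k → ∞. -/

import Mathlib

open Real Filter

/-! ### Auxiliary lemmas -/

lemma gamma_midpoint (y : ℝ) (hy : 0 < y) :
    Real.Gamma (y + 1/2) ^ 2 ≤ Real.Gamma y * Real.Gamma (y + 1) := by
  have h := convexOn_log_Gamma.2 (Set.mem_Ioi.2 hy) (Set.mem_Ioi.2 (by linarith : (0:ℝ) < y + 1))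
    (by norm_num : (0:ℝ) ≤ 1/2) (by norm_num : (0:ℝ) ≤ 1/2) (by norm_num)
  simp only [smul_eq_mul, Function.comp_apply] at h
  rw [show (1/2 : ℝ) * y + 1/2 * (y + 1) = y + 1/2 by ring] at h
  have h2 : 0 < Real.Gamma y := Real.Gamma_pos_of_pos hy
  have h3 : 0 < Real.Gamma (y + 1) := Real.Gamma_pos_of_pos (by linarith)
  have h1 : 0 < Real.Gamma (y + 1/2) := Real.Gamma_pos_of_pos (by linarith)
  rw [← Real.log_le_log_iff (by positivity) (by positivity), Real.log_pow,
    Real.log_mul h2.ne' h3.ne']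
  push_cast
  linarith

lemma fact_pos' (j : ℕ) : (0:ℝ) < (j.factorial : ℝ) := by positivity

lemma g_upper (j : ℕ) :
    Real.Gamma ((j:ℝ) + 3/2) / j.factorial ≤ Real.sqrt ((j:ℝ) + 1) := by
  have h := gamma_midpoint ((j:ℝ) + 1) (by positivity)
  have e1 : ((j:ℝ) + 1) + 1/2 = (j:ℝ) + 3/2 := by ring
  have e2 : Real.Gamma ((j:ℝ) + 1) = j.factorial := Real.Gamma_nat_eq_factorial j
  have e3 : Real.Gamma (((j:ℝ) + 1) + 1) = (j+1).factorial := by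
    rw [show ((j:ℝ)+1)+1 = ((j+1:ℕ):ℝ)+1 by push_cast; ring, Real.Gamma_nat_eq_factorial]
  rw [e1, e2, e3] at h
  rw [Real.le_sqrt (by positivity) (by positivity), div_pow, div_le_iff₀ (by positivity)]
  have e4 : (((j+1).factorial : ℝ)) = ((j:ℝ)+1) * j.factorial := by
    rw [Nat.factorial_succ]; push_cast; ring
  rw [e4] at h
  nlinarith [fact_pos' j]

lemma g_lower (j : ℕ) :
    Real.sqrt ((j:ℝ) + 1/2) ≤ Real.Gamma ((j:ℝ) + 3/2) / j.factorial := by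
  have h := gamma_midpoint ((j:ℝ) + 1/2) (by positivity)
  have e1 : ((j:ℝ) + 1/2) + 1/2 = (j:ℝ) + 1 := by ring
  have e2 : Real.Gamma ((j:ℝ) + 1) = j.factorial := Real.Gamma_nat_eq_factorial j
  have e3 : Real.Gamma (((j:ℝ) + 1/2) + 1) = ((j:ℝ) + 1/2) * Real.Gamma ((j:ℝ)+1/2) :=
    Real.Gamma_add_one (by positivity)
  rw [e1, e2, e3] at h
  have hg : 0 < Real.Gamma ((j:ℝ) + 1/2) := Real.Gamma_pos_of_pos (by positivity)
  have e4 : Real.Gamma ((j:ℝ) + 3/2) = ((j:ℝ)+1/2) * Real.Gamma ((j:ℝ)+1/2) := by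
    rw [show (j:ℝ) + 3/2 = ((j:ℝ)+1/2)+1 by ring]; exact Real.Gamma_add_one (by positivity)
  have key : ((j:ℝ)+1/2) * (j.factorial:ℝ)^2 ≤ Real.Gamma ((j:ℝ) + 3/2)^2 := by
    rw [e4]; nlinarith [hg, fact_pos' j]
  have h2 := Real.sqrt_le_sqrt key
  rw [Real.sqrt_mul (by positivity), Real.sqrt_sq (le_of_lt (fact_pos' j)),
    Real.sqrt_sq (Real.Gamma_nonneg_of_nonneg (by positivity))] at h2
  rw [le_div_iff₀ (fact_pos' j)]
  exact h2

/-! ### Poisson-type moment sums -/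

noncomputable def Pfun (k : ℝ) (j : ℕ) : ℝ := k ^ j / j.factorial

lemma summable_P (k : ℝ) : Summable (Pfun k) := Real.summable_pow_div_factorial k

lemma sum_P (k : ℝ) : ∑' j : ℕ, Pfun k j = Real.exp k := by
  rw [Real.exp_eq_exp_ℝ, NormedSpace.exp_eq_tsum_div]; rfl

lemma Pfun_nonneg {k : ℝ} (hk : 0 ≤ k) (j : ℕ) : 0 ≤ Pfun k j := by
  unfold Pfun; positivity

lemma shift_eq (k : ℝ) (j : ℕ) :
    ((j:ℝ)+1) * Pfun k (j+1) = k * Pfun k j := by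
  unfold Pfun
  rw [Nat.factorial_succ]
  push_cast
  have h : ((j:ℝ)+1) ≠ 0 := by positivity
  field_simp
  ring

lemma summable_jP (k : ℝ) : Summable (fun j : ℕ => (j:ℝ) * Pfun k j) := by
  rw [← summable_nat_add_iff 1]
  have : (fun n : ℕ => ((n+1:ℕ):ℝ) * Pfun k (n+1)) = fun n => k * Pfun k n := by
    funext n; push_cast; rw [shift_eq]
  rw [this]
  exact (summable_P k).mul_left k

lemma sum_jP (k : ℝ) : ∑' j : ℕ, (j:ℝ) * Pfun k j = k * Real.exp k := by
  rw [Summable.tsum_eq_zero_add (summable_jP k)]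
  simp only [Nat.cast_zero, zero_mul, zero_add]
  have : (fun n : ℕ => ((n+1:ℕ):ℝ) * Pfun k (n+1)) = fun n => k * Pfun k n := by
    funext n; push_cast; rw [shift_eq]
  rw [this, tsum_mul_left, sum_P]

lemma summable_j2P (k : ℝ) : Summable (fun j : ℕ => (j:ℝ)^2 * Pfun k j) := by
  rw [← summable_nat_add_iff 1]
  have : (fun n : ℕ => ((n+1:ℕ):ℝ)^2 * Pfun k (n+1))
      = fun n : ℕ => k * ((n:ℝ) * Pfun k n) + k * Pfun k n := by
    funext n
    push_cast
    have h := shift_eq k n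
    calc ((n:ℝ)+1)^2 * Pfun k (n+1) = ((n:ℝ)+1) * (((n:ℝ)+1) * Pfun k (n+1)) := by ring
    _ = ((n:ℝ)+1) * (k * Pfun k n) := by rw [h]
    _ = k * ((n:ℝ) * Pfun k n) + k * Pfun k n := by ring
  rw [this]
  exact ((summable_jP k).mul_left k).add ((summable_P k).mul_left k)

lemma sum_j2P (k : ℝ) : ∑' j : ℕ, (j:ℝ)^2 * Pfun k j = (k^2 + k) * Real.exp k := by
  rw [Summable.tsum_eq_zero_add (summable_j2P k)]
  simp only [Nat.cast_zero, zero_pow, zero_mul, zero_add, ne_eq, OfNat.ofNat_ne_zero,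
    not_false_eq_true]
  have : (fun n : ℕ => ((n+1:ℕ):ℝ)^2 * Pfun k (n+1))
      = fun n : ℕ => k * ((n:ℝ) * Pfun k n) + k * Pfun k n := by
    funext n
    push_cast
    have h := shift_eq k n
    calc ((n:ℝ)+1)^2 * Pfun k (n+1) = ((n:ℝ)+1) * (((n:ℝ)+1) * Pfun k (n+1)) := by ring
    _ = ((n:ℝ)+1) * (k * Pfun k n) := by rw [h]
    _ = k * ((n:ℝ) * Pfun k n) + k * Pfun k n := by ring
  rw [this, Summable.tsum_add ((summable_jP k).mul_left k) ((summable_P k).mul_left k),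
    tsum_mul_left, tsum_mul_left, sum_jP, sum_P]
  ring

lemma summable_combo (k a b c : ℝ) :
    Summable (fun j : ℕ => (a + b*(j:ℝ) + c*(j:ℝ)^2) * Pfun k j) := by
  have : (fun j : ℕ => (a + b*(j:ℝ) + c*(j:ℝ)^2) * Pfun k j)
      = fun j => a * Pfun k j + b * ((j:ℝ) * Pfun k j) + c * ((j:ℝ)^2 * Pfun k j) := by
    funext j; ring
  rw [this]
  exact (((summable_P k).mul_left a).add ((summable_jP k).mul_left b)).add
    ((summable_j2P k).mul_left c)

lemma sum_combo (k a b c : ℝ) :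
    ∑' j : ℕ, (a + b*(j:ℝ) + c*(j:ℝ)^2) * Pfun k j = (a + b*k + c*(k^2+k)) * Real.exp k := by
  have : (fun j : ℕ => (a + b*(j:ℝ) + c*(j:ℝ)^2) * Pfun k j)
      = fun j => a * Pfun k j + b * ((j:ℝ) * Pfun k j) + c * ((j:ℝ)^2 * Pfun k j) := by
    funext j; ring
  rw [this, Summable.tsum_add (((summable_P k).mul_left a).add ((summable_jP k).mul_left b))
      ((summable_j2P k).mul_left c),
    Summable.tsum_add ((summable_P k).mul_left a) ((summable_jP k).mul_left b),
    tsum_mul_left, tsum_mul_left, tsum_mul_left, sum_P, sum_jP, sum_j2P]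
  ring

/-! ### The statement -/

/-- The confluent hypergeometric series `₁F₁(3/2; 1; k)` written out as
`∑_{j≥0} (Γ(j+3/2)/Γ(3/2)) · k^j / (j!)²`. -/
noncomputable def hyperM (k : ℝ) : ℝ :=
  ∑' j : ℕ, (Real.Gamma ((j : ℝ) + 3 / 2) / Real.Gamma (3 / 2)) * k ^ j
    / ((Nat.factorial j : ℝ)) ^ 2

/-- `ω(k) = (π/4)·₁F₁²(3/2;1;k)/((1+k)·e^{2k})`. -/
noncomputable def omegaFun (k : ℝ) : ℝ :=
  (π / 4) * (hyperM k) ^ 2 / ((1 + k) * Real.exp (2 * k))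

lemma gamma32_pos : 0 < Real.Gamma (3/2 : ℝ) := Real.Gamma_pos_of_pos (by norm_num)

lemma hyperM_eq (k : ℝ) :
    Real.Gamma (3/2 : ℝ) * hyperM k
      = ∑' j : ℕ, (Real.Gamma ((j:ℝ) + 3/2) / j.factorial) * Pfun k j := by
  unfold hyperM Pfun
  rw [← tsum_mul_left]
  congr 1
  funext j
  have h1 := gamma32_pos.ne'
  have h2 := (fact_pos' j).ne'
  field_simp

lemma summable_G {k : ℝ} (hk : 0 ≤ k) :
    Summable (fun j : ℕ => (Real.Gamma ((j:ℝ) + 3/2) / j.factorial) * Pfun k j) := by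
  have hsumg : Summable (fun j : ℕ => ((j:ℝ)+1) * Pfun k j) :=
    ((summable_jP k).add (summable_P k)).congr (fun j => by ring)
  refine Summable.of_nonneg_of_le
    (fun j => mul_nonneg (div_nonneg (Real.Gamma_nonneg_of_nonneg (by positivity))
      (fact_pos' j).le) (Pfun_nonneg hk j))
    (fun j => ?_) hsumg
  · refine mul_le_mul_of_nonneg_right ?_ (Pfun_nonneg hk j)
    refine (g_upper j).trans ?_
    calc Real.sqrt ((j:ℝ)+1) ≤ Real.sqrt (((j:ℝ)+1)^2) := Real.sqrt_le_sqrt (by nlinarith)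
    _ = (j:ℝ)+1 := Real.sqrt_sq (by positivity)

lemma hyperM_nonneg {k : ℝ} (hk : 0 ≤ k) : 0 ≤ hyperM k := by
  unfold hyperM
  refine tsum_nonneg fun j => ?_
  have := Real.Gamma_nonneg_of_nonneg (show (0:ℝ) ≤ (j:ℝ) + 3/2 by positivity)
  positivity

lemma hyperM_upper {k : ℝ} (hk : 0 ≤ k) :
    Real.Gamma (3/2 : ℝ) * hyperM k ≤ Real.sqrt (k+1) * Real.exp k := by
  set s := Real.sqrt (k+1) with hs
  have hspos : 0 < s := Real.sqrt_pos.2 (by linarith)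
  have hs2 : s^2 = k+1 := Real.sq_sqrt (by linarith)
  have step : ∀ j : ℕ, (Real.Gamma ((j:ℝ) + 3/2) / j.factorial) * Pfun k j
      ≤ ((k+2)/(2*s) + (1/(2*s))*(j:ℝ) + 0*(j:ℝ)^2) * Pfun k j := by
    intro j
    refine mul_le_mul_of_nonneg_right ?_ (Pfun_nonneg hk j)
    refine (g_upper j).trans ?_
    set a := Real.sqrt ((j:ℝ)+1) with ha
    have hapos : 0 ≤ a := Real.sqrt_nonneg _
    have ha2 : a^2 = (j:ℝ)+1 := Real.sq_sqrt (by positivity)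
    rw [show (k+2)/(2*s) + (1/(2*s))*(j:ℝ) + 0*(j:ℝ)^2 = (a^2 + s^2)/(2*s) by
      rw [ha2, hs2]; field_simp; ring]
    rw [le_div_iff₀ (by positivity)]
    nlinarith [sq_nonneg (a - s)]
  rw [hyperM_eq]
  calc ∑' j : ℕ, (Real.Gamma ((j:ℝ) + 3/2) / j.factorial) * Pfun k j
      ≤ ∑' j : ℕ, ((k+2)/(2*s) + (1/(2*s))*(j:ℝ) + 0*(j:ℝ)^2) * Pfun k j :=
        Summable.tsum_le_tsum step (summable_G hk) (summable_combo k _ _ _)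
  _ = ((k+2)/(2*s) + (1/(2*s))*k + 0*(k^2+k)) * Real.exp k := sum_combo k _ _ _
  _ = s * Real.exp k := by
    have hcoef : (k+2)/(2*s) + (1/(2*s))*k + 0*(k^2+k) = s := by
      field_simp
      nlinarith [hs2]
    rw [hcoef]

lemma hyperM_lower {k : ℝ} (hk : 1 ≤ k) :
    (Real.sqrt k - 1) * Real.exp k ≤ Real.Gamma (3/2 : ℝ) * hyperM k := by
  have hk0 : 0 < k := by linarith
  set b := Real.sqrt k with hb
  have hbpos : 0 < b := Real.sqrt_pos.2 hk0
  have hb2 : b^2 = k := Real.sq_sqrt hk0.le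
  have step : ∀ j : ℕ, ((b - (k+1)/2) + 1*(j:ℝ) + (-(1/(2*k)))*(j:ℝ)^2) * Pfun k j
      ≤ (Real.Gamma ((j:ℝ) + 3/2) / j.factorial) * Pfun k j := by
    intro j
    refine mul_le_mul_of_nonneg_right ?_ (Pfun_nonneg hk0.le j)
    set a := Real.sqrt (j:ℝ) with ha
    have hapos : 0 ≤ a := Real.sqrt_nonneg _
    have ha2 : a^2 = (j:ℝ) := Real.sq_sqrt (by positivity)
    have s1 : (b - (k+1)/2) + 1*(j:ℝ) + (-(1/(2*k)))*(j:ℝ)^2 ≤ a := by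
      have key : (b - a) * (2*k) ≤ ((j:ℝ)-k)^2 + k := by
        rw [← ha2, ← hb2]
        nlinarith [sq_nonneg (b*(a-b+1)),
          mul_nonneg (mul_nonneg hapos (by positivity : (0:ℝ) ≤ a + 2*b)) (sq_nonneg (a-b))]
      have h2 : b - a ≤ (((j:ℝ)-k)^2 + k)/(2*k) := (le_div_iff₀ (by positivity)).2 key
      have h3 : (b - (k+1)/2) + 1*(j:ℝ) + (-(1/(2*k)))*(j:ℝ)^2
          = b - (((j:ℝ)-k)^2 + k)/(2*k) := by field_simp; ring
      linarith [h3.le, h3.ge]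
    refine s1.trans ?_
    calc a ≤ Real.sqrt ((j:ℝ)+1/2) := Real.sqrt_le_sqrt (by linarith)
    _ ≤ _ := g_lower j
  rw [hyperM_eq]
  calc (b - 1) * Real.exp k
      = ((b - (k+1)/2) + 1*k + (-(1/(2*k)))*(k^2+k)) * Real.exp k := by
        have hcoef : (b - (k+1)/2) + 1*k + (-(1/(2*k)))*(k^2+k) = b - 1 := by
          field_simp; ring
        rw [hcoef]
  _ = ∑' j : ℕ, ((b - (k+1)/2) + 1*(j:ℝ) + (-(1/(2*k)))*(j:ℝ)^2) * Pfun k j :=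
        (sum_combo k _ _ _).symm
  _ ≤ ∑' j : ℕ, (Real.Gamma ((j:ℝ) + 3/2) / j.factorial) * Pfun k j :=
        Summable.tsum_le_tsum step (summable_combo k _ _ _) (summable_G hk0.le)

lemma gamma32_eq : Real.Gamma (3/2 : ℝ) = Real.sqrt π / 2 := by
  rw [show (3/2:ℝ) = 1/2 + 1 by norm_num, Real.Gamma_add_one (by norm_num),
    Real.Gamma_one_half_eq]
  ring

lemma gamma32_sq : Real.Gamma (3/2 : ℝ)^2 = π / 4 := by
  rw [gamma32_eq, div_pow, Real.sq_sqrt Real.pi_pos.le]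
  norm_num

lemma exp_two_mul' (k : ℝ) : Real.exp (2*k) = Real.exp k * Real.exp k := by
  rw [two_mul, Real.exp_add]

lemma omega_le_one {k : ℝ} (hk : 0 ≤ k) : omegaFun k ≤ 1 := by
  have hU := hyperM_upper hk
  have hH := hyperM_nonneg hk
  have hA : 0 ≤ Real.Gamma (3/2:ℝ) * hyperM k := mul_nonneg gamma32_pos.le hH
  have hsq : (Real.Gamma (3/2:ℝ) * hyperM k)^2 ≤ (Real.sqrt (k+1) * Real.exp k)^2 :=
    pow_le_pow_left₀ hA hU 2
  have hrhs : (Real.sqrt (k+1) * Real.exp k)^2 = (k+1) * (Real.exp k * Real.exp k) := by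
    rw [mul_pow, Real.sq_sqrt (by linarith)]; ring
  have hlhs : (Real.Gamma (3/2:ℝ) * hyperM k)^2 = (π/4) * (hyperM k)^2 := by
    rw [mul_pow, gamma32_sq]
  unfold omegaFun
  rw [div_le_one (by positivity), exp_two_mul']
  nlinarith [hsq, hrhs, hlhs]

lemma omega_ge {k : ℝ} (hk : 1 ≤ k) : (Real.sqrt k - 1)^2 / (k+1) ≤ omegaFun k := by
  have hk0 : (0:ℝ) < k := by linarith
  have hL := hyperM_lower hk
  have hb1 : 1 ≤ Real.sqrt k := by
    rw [show (1:ℝ) = Real.sqrt 1 by simp]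
    exact Real.sqrt_le_sqrt hk
  have hnn : 0 ≤ (Real.sqrt k - 1) * Real.exp k := by
    apply mul_nonneg (by linarith) (Real.exp_pos k).le
  have hsq : ((Real.sqrt k - 1) * Real.exp k)^2 ≤ (Real.Gamma (3/2:ℝ) * hyperM k)^2 :=
    pow_le_pow_left₀ hnn hL 2
  have hlhs : ((Real.sqrt k - 1) * Real.exp k)^2
      = (Real.sqrt k - 1)^2 * (Real.exp k * Real.exp k) := by ring
  have hrhs : (Real.Gamma (3/2:ℝ) * hyperM k)^2 = (π/4) * (hyperM k)^2 := by
    rw [mul_pow, gamma32_sq]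
  unfold omegaFun
  rw [div_le_div_iff₀ (by linarith) (by positivity), exp_two_mul']
  nlinarith [hsq, hlhs, hrhs]

lemma sqrt_div_tendsto : Tendsto (fun k : ℝ => Real.sqrt k / (k+1)) atTop (nhds 0) := by
  have hs : Tendsto Real.sqrt atTop atTop := by
    rw [show Real.sqrt = fun x : ℝ => x ^ (1/2 : ℝ) from funext fun x => Real.sqrt_eq_rpow x]
    exact tendsto_rpow_atTop (by norm_num)
  have hinv : Tendsto (fun k : ℝ => (Real.sqrt k)⁻¹) atTop (nhds 0) :=
    hs.inv_tendsto_atTop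
  refine tendsto_of_tendsto_of_tendsto_of_le_of_le' tendsto_const_nhds hinv ?_ ?_
  · filter_upwards [eventually_ge_atTop (0:ℝ)] with k hk
    positivity
  · filter_upwards [eventually_ge_atTop (1:ℝ)] with k hk
    have hk0 : (0:ℝ) < k := by linarith
    have hbpos : 0 < Real.sqrt k := Real.sqrt_pos.2 hk0
    rw [div_le_iff₀ (by linarith : (0:ℝ) < k+1)]
    have h1 : (Real.sqrt k)⁻¹ * (k+1) = (k+1) / Real.sqrt k := by ring
    rw [h1, le_div_iff₀ hbpos]
    have := Real.mul_self_sqrt hk0.le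
    nlinarith

/-- Case 3 of Corollary 1: `ω(k) → 1` as `k → ∞` (double-LOS limit). -/
theorem omega_tendsto_one : Tendsto omegaFun atTop (nhds 1) := by
  have hlow : Tendsto (fun k : ℝ => 1 - 2 * (Real.sqrt k / (k+1))) atTop (nhds 1) := by
    have := (sqrt_div_tendsto.const_mul 2)
    have h2 : Tendsto (fun k : ℝ => 1 - 2 * (Real.sqrt k / (k+1))) atTop (nhds (1 - 2*0)) :=
      tendsto_const_nhds.sub this
    simpa using h2
  refine tendsto_of_tendsto_of_tendsto_of_le_of_le' hlow tendsto_const_nhds ?_ ?_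
  · filter_upwards [eventually_ge_atTop (1:ℝ)] with k hk
    have hk0 : (0:ℝ) < k := by linarith
    have heq : 1 - 2 * (Real.sqrt k / (k+1)) = (Real.sqrt k - 1)^2 / (k+1) := by
      have h := Real.sq_sqrt hk0.le
      field_simp
      nlinarith [h]
    rw [heq]
    exact omega_ge hk
  · filter_upwards [eventually_ge_atTop (0:ℝ)] with k hk
    exact omega_le_one hk
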